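/- Under perfect alignment of feature distributions, the adaptation bound collapses to the joint-error term: if g : X → Z is a measurable feature generator with g#P_s = g#P_t, then for every h ∈ H and every h* ∈ H, ε_t(h∘g) ≤ ε_s(h∘g) + ε_s(h*∘g) + ε_t(h*∘g), where ε_s and ε_t denote the source and target expected errors of the composed classifier. -/

import Mathlib

open MeasureTheory

/-- Under perfect alignment of the feature distributions (`g#P_s = g#P_t`), the
adaptation bound collapses to the joint-error term: for every `h ∈ H` and
`h* ∈ H`, `ε_t(h∘g) ≤ ε_s(h∘g) + ε_s(h*∘g) + ε_t(h*∘g)`. -/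
theorem target_error_bound_of_aligned
    {X Z : Type*} [MeasurableSpace X] [MeasurableSpace Z]
    (Ps Pt : Measure X) [IsProbabilityMeasure Ps] [IsProbabilityMeasure Pt]
    (fs ft : X → Bool) (hfs : Measurable fs) (hft : Measurable ft)
    (g : X → Z) (hg : Measurable g)
    (halign : Ps.map g = Pt.map g)
    (H : Set (Z → Bool)) (hHne : H.Nonempty)
    (hHmeas : ∀ h ∈ H, Measurable h)
    (h : Z → Bool) (hh : h ∈ H)
    (hstar : Z → Bool) (hhstar : hstar ∈ H) :
    (Pt {x | h (g x) ≠ ft x}).toReal ≤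
      (Ps {x | h (g x) ≠ fs x}).toReal
      + (Ps {x | hstar (g x) ≠ fs x}).toReal
      + (Pt {x | hstar (g x) ≠ ft x}).toReal := by
  have hmeasD : MeasurableSet {z | h z ≠ hstar z} := by
    have : MeasurableSet {z | h z = hstar z} :=
      measurableSet_eq_fun (hHmeas h hh) (hHmeas hstar hhstar)
    simpa [Set.compl_setOf] using this.compl
  -- key equality from alignment
  have hkey : Pt {x | h (g x) ≠ hstar (g x)} = Ps {x | h (g x) ≠ hstar (g x)} := by
    have h1 : Ps.map g {z | h z ≠ hstar z} = Ps {x | h (g x) ≠ hstar (g x)} :=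
      Measure.map_apply hg hmeasD
    have h2 : Pt.map g {z | h z ≠ hstar z} = Pt {x | h (g x) ≠ hstar (g x)} :=
      Measure.map_apply hg hmeasD
    rw [← h1, ← h2, halign]
  have tri : ∀ (μ : Measure X) (a b c : X → Bool),
      μ {x | a x ≠ c x} ≤ μ {x | a x ≠ b x} + μ {x | b x ≠ c x} := by
    intro μ a b c
    refine le_trans (measure_mono ?_) (measure_union_le _ _)
    intro x hx
    by_cases hab : a x = b x
    · right; simpa [Set.mem_setOf_eq, hab] using hx
    · left; exact hab
  have t1 : Pt {x | h (g x) ≠ ft x} ≤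
      Pt {x | h (g x) ≠ hstar (g x)} + Pt {x | hstar (g x) ≠ ft x} :=
    tri Pt (fun x => h (g x)) (fun x => hstar (g x)) ft
  have t2 : Ps {x | h (g x) ≠ hstar (g x)} ≤
      Ps {x | h (g x) ≠ fs x} + Ps {x | hstar (g x) ≠ fs x} := by
    have := tri Ps (fun x => h (g x)) fs (fun x => hstar (g x))
    simpa [ne_comm] using this
  have final : Pt {x | h (g x) ≠ ft x} ≤
      Ps {x | h (g x) ≠ fs x} + Ps {x | hstar (g x) ≠ fs x}
        + Pt {x | hstar (g x) ≠ ft x} := by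
    calc Pt {x | h (g x) ≠ ft x}
        ≤ Pt {x | h (g x) ≠ hstar (g x)} + Pt {x | hstar (g x) ≠ ft x} := t1
      _ = Ps {x | h (g x) ≠ hstar (g x)} + Pt {x | hstar (g x) ≠ ft x} := by rw [hkey]
      _ ≤ Ps {x | h (g x) ≠ fs x} + Ps {x | hstar (g x) ≠ fs x}
            + Pt {x | hstar (g x) ≠ ft x} := add_le_add_left t2 _
  have hne : ∀ (μ : Measure X) [IsProbabilityMeasure μ] (s : Set X), μ s ≠ ⊤ :=
    fun μ _ s => measure_ne_top μ s
  calc (Pt {x | h (g x) ≠ ft x}).toReal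
      ≤ (Ps {x | h (g x) ≠ fs x} + Ps {x | hstar (g x) ≠ fs x}
          + Pt {x | hstar (g x) ≠ ft x}).toReal := by
        exact ENNReal.toReal_mono (by finiteness) final
    _ = _ := by rw [ENNReal.toReal_add (by finiteness) (by finiteness),
          ENNReal.toReal_add (by finiteness) (by finiteness)]
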